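/- arXiv:2007.08249 — 4 statements merged into one kernel-verified Lean document; each statement's English description precedes it below -/
import Mathlib

section
/- Let φ be a 4×4 antisymmetric complex matrix (indices with Minkowski metric), Λ = exp[(1/2)φ:J] its exponential action on four-vectors, and for a four-vector b define b̃(φ) = Σ_{k=0}^∞ (1/(k+1)!) ((1/2)φ:J)^k (b). Then for every nonnegative integer s, Λ^{-s} b̃(φ) = (1-s)·b̃((1-s)φ) + s·b̃(-sφ). -/
noncomputable section

open scoped BigOperators Matrix

/-- Minkowski metric `diag(1,-1,-1,-1)` as a complex matrix. -/
def minkMetric : Matrix (Fin 4) (Fin 4) ℂ := Matrix.diagonal ![1, -1, -1, -1]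

/-- The matrix of `(1/2) φ:J` acting on (raised-index) four-vectors: `x ↦ i η·φ·x`,
so that `((1/2)φ:J)^k (b)` is `i^k` times the `k`-fold matrix product
`φ_{μν₁}φ^{ν₁ν₂}···φ_{ν_{k-1}ν_k} b^{ν_k}`. -/
def halfPhiJ (φ : Matrix (Fin 4) (Fin 4) ℂ) : Matrix (Fin 4) (Fin 4) ℂ :=
  Complex.I • (minkMetric * φ)

/-- `b̃(φ) = Σ_{k=0}^∞ (1/(k+1)!) ((1/2)φ:J)^k (b)`. -/
def tildeB (φ : Matrix (Fin 4) (Fin 4) ℂ) (b : Fin 4 → ℂ) : Fin 4 → ℂ :=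
  ∑' k : ℕ, (((k + 1).factorial : ℂ)⁻¹) • ((halfPhiJ φ ^ k).mulVec b)

namespace Stmt1Aux

abbrev Mat := Matrix (Fin 4) (Fin 4) ℂ

/-- The key scalar binomial identity. -/
lemma coeff_sum (x : ℂ) (n : ℕ) :
    ∑ m ∈ Finset.range (n + 1),
        ((m.factorial : ℂ)⁻¹ * (((n - m) + 1).factorial : ℂ)⁻¹ * x ^ m)
      = (((n + 1).factorial : ℂ))⁻¹ * ((1 + x) ^ (n + 1) - x ^ (n + 1)) := by
  have h1 : ∀ m ∈ Finset.range (n + 1),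
      (m.factorial : ℂ)⁻¹ * (((n - m) + 1).factorial : ℂ)⁻¹ * x ^ m
        = ((n + 1).factorial : ℂ)⁻¹ * (x ^ m * ((n + 1).choose m : ℂ)) := by
    intro m hm
    have hm' : m ≤ n := Nat.lt_succ_iff.mp (Finset.mem_range.mp hm)
    have hnm : (n - m) + 1 = n + 1 - m := by omega
    have hc : ((n + 1).choose m * m.factorial * (n + 1 - m).factorial : ℕ)
        = (n + 1).factorial := Nat.choose_mul_factorial_mul_factorial (by omega)
    have hc' : (((n + 1).choose m : ℂ)) * (m.factorial : ℂ) * ((n + 1 - m).factorial : ℂ)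
        = ((n + 1).factorial : ℂ) := by exact_mod_cast congrArg (Nat.cast : ℕ → ℂ) hc
    have h2 : (m.factorial : ℂ) ≠ 0 := Nat.cast_ne_zero.mpr (Nat.factorial_ne_zero _)
    have h3 : ((n + 1 - m).factorial : ℂ) ≠ 0 := Nat.cast_ne_zero.mpr (Nat.factorial_ne_zero _)
    have h4 : (((n + 1).factorial : ℂ)) ≠ 0 := Nat.cast_ne_zero.mpr (Nat.factorial_ne_zero _)
    rw [hnm]
    field_simp
    linear_combination (-(x ^ m)) * hc'
  rw [Finset.sum_congr rfl h1, ← Finset.mul_sum]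
  congr 1
  have hb := add_pow x 1 (n + 1)
  simp only [one_pow, mul_one] at hb
  rw [Finset.sum_range_succ, Nat.choose_self, Nat.cast_one, mul_one] at hb
  have : (1 + x) ^ (n + 1) = (x + 1) ^ (n + 1) := by ring
  rw [this, hb]
  ring

/-- Summability (in norm is proved inside) of the `b̃` series at matrix level. -/
lemma summable_T (A : Mat) (c : ℂ) :
    Summable fun k : ℕ => (((k + 1).factorial : ℂ)⁻¹) • (c • A) ^ k := by
  letI : SeminormedRing Mat := Matrix.linftyOpSemiNormedRing
  letI : NormedRing Mat := Matrix.linftyOpNormedRing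
  letI : NormedAlgebra ℂ Mat := Matrix.linftyOpNormedAlgebra
  refine Summable.of_norm ?_
  refine Summable.of_nonneg_of_le (fun _ => norm_nonneg _) (fun k => ?_)
    (NormedSpace.norm_expSeries_summable' (𝕂 := ℂ) (c • A))
  rw [norm_smul, norm_smul, norm_inv, norm_inv, Complex.norm_natCast, Complex.norm_natCast]
  gcongr
  omega

lemma summable_norm_T (A : Mat) (c : ℂ) :
    letI : SeminormedRing Mat := Matrix.linftyOpSemiNormedRing
    letI : NormedRing Mat := Matrix.linftyOpNormedRing
    Summable fun k : ℕ => ‖(((k + 1).factorial : ℂ)⁻¹) • (c • A) ^ k‖ := by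
  letI : SeminormedRing Mat := Matrix.linftyOpSemiNormedRing
  letI : NormedRing Mat := Matrix.linftyOpNormedRing
  letI : NormedAlgebra ℂ Mat := Matrix.linftyOpNormedAlgebra
  refine Summable.of_nonneg_of_le (fun _ => norm_nonneg _) (fun k => ?_)
    (NormedSpace.norm_expSeries_summable' (𝕂 := ℂ) (c • A))
  rw [norm_smul, norm_smul, norm_inv, norm_inv, Complex.norm_natCast, Complex.norm_natCast]
  gcongr
  omega

/-- The key matrix identity. -/
lemma key (A : Mat) (s : ℂ) :
    NormedSpace.exp ((-s) • A) * (∑' k : ℕ, (((k + 1).factorial : ℂ)⁻¹) • A ^ k)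
      = (1 - s) • (∑' k : ℕ, (((k + 1).factorial : ℂ)⁻¹) • ((1 - s) • A) ^ k)
        + s • (∑' k : ℕ, (((k + 1).factorial : ℂ)⁻¹) • ((-s) • A) ^ k) := by
  letI : SeminormedRing Mat := Matrix.linftyOpSemiNormedRing
  letI : NormedRing Mat := Matrix.linftyOpNormedRing
  letI : NormedAlgebra ℂ Mat := Matrix.linftyOpNormedAlgebra
  have hf : Summable fun m : ℕ => ‖((m.factorial : ℂ)⁻¹) • ((-s) • A) ^ m‖ :=
    NormedSpace.norm_expSeries_summable' (𝕂 := ℂ) ((-s) • A)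
  have hg : Summable fun k : ℕ => ‖(((k + 1).factorial : ℂ)⁻¹) • ((1 : ℂ) • A) ^ k‖ :=
    summable_norm_T A 1
  simp only [one_smul] at hg
  rw [NormedSpace.exp_eq_tsum ℂ]
  beta_reduce
  erw [tsum_mul_tsum_eq_tsum_sum_antidiagonal_of_summable_norm hf hg]
  have hterm : ∀ n : ℕ, (∑ kl ∈ Finset.HasAntidiagonal.antidiagonal n,
        (((kl.1.factorial : ℂ)⁻¹) • ((-s) • A) ^ kl.1)
          * ((((kl.2 + 1).factorial : ℂ)⁻¹) • A ^ kl.2))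
      = ((((n + 1).factorial : ℂ))⁻¹ * ((1 + (-s)) ^ (n + 1) - (-s) ^ (n + 1))) • A ^ n := by
    intro n
    rw [Finset.Nat.sum_antidiagonal_eq_sum_range_succ
      (fun m k => (((m.factorial : ℂ)⁻¹) • ((-s) • A) ^ m)
        * ((((k + 1).factorial : ℂ)⁻¹) • A ^ k))]
    have h2 : ∀ m ∈ Finset.range (n + 1),
        (((m.factorial : ℂ)⁻¹) • ((-s) • A) ^ m)
            * ((((n - m + 1).factorial : ℂ)⁻¹) • A ^ (n - m))
          = ((m.factorial : ℂ)⁻¹ * (((n - m) + 1).factorial : ℂ)⁻¹ * (-s) ^ m) • A ^ n := by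
      intro m hm
      have hm' : m ≤ n := Nat.lt_succ_iff.mp (Finset.mem_range.mp hm)
      rw [smul_pow, smul_smul, smul_mul_smul_comm, ← pow_add]
      have : m + (n - m) = n := by omega
      rw [this]
      ring_nf
    rw [Finset.sum_congr rfl h2, ← Finset.sum_smul, coeff_sum (-s) n]
  erw [tsum_congr hterm]
  rw [← Summable.tsum_const_smul (1 - s) (summable_T A (1 - s)),
    ← Summable.tsum_const_smul s (summable_T A (-s)),
    ← Summable.tsum_add (((summable_T A (1 - s)).const_smul (1 - s)))
      (((summable_T A (-s)).const_smul s))]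
  refine tsum_congr fun n => ?_
  rw [smul_pow, smul_pow, smul_smul, smul_smul, smul_smul, smul_smul, ← add_smul]
  congr 1
  ring

/-- `mulVec` commutes with `tsum`. -/
lemma tsum_mulVec (M : ℕ → Mat) (hM : Summable M) (b : Fin 4 → ℂ) :
    (∑' k : ℕ, M k).mulVec b = ∑' k : ℕ, (M k).mulVec b := by
  let L0 : Mat →ₗ[ℂ] (Fin 4 → ℂ) :=
    { toFun := fun N => N.mulVec b
      map_add' := fun x y => Matrix.add_mulVec x y b
      map_smul' := fun c x => (Matrix.smul_mulVec c x b) }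
  let L : Mat →L[ℂ] (Fin 4 → ℂ) := ⟨L0, L0.continuous_of_finiteDimensional⟩
  exact L.map_tsum hM

end Stmt1Aux

/-- the recurrence `Λ^{-s} b̃(φ) = (1-s)·b̃((1-s)φ) + s·b̃(-sφ)`,
where `Λ = exp[(1/2)φ:J]`. -/
theorem stmt1 (φ : Matrix (Fin 4) (Fin 4) ℂ) (hφ : φᵀ = -φ) (b : Fin 4 → ℂ) (s : ℕ) :
    (NormedSpace.exp ((-(s : ℂ)) • halfPhiJ φ)).mulVec (tildeB φ b)
      = (1 - (s : ℂ)) • tildeB ((1 - (s : ℂ)) • φ) b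
        + (s : ℂ) • tildeB ((-(s : ℂ)) • φ) b := by
  classical
  set A := halfPhiJ φ with hA
  have hhalf : ∀ c : ℂ, halfPhiJ (c • φ) = c • A := by
    intro c
    simp only [halfPhiJ, hA, Matrix.mul_smul]
    rw [smul_comm]
  have htB : ∀ c : ℂ, tildeB (c • φ) b
      = (∑' k : ℕ, (((k + 1).factorial : ℂ)⁻¹) • (c • A) ^ k).mulVec b := by
    intro c
    rw [Stmt1Aux.tsum_mulVec _ (Stmt1Aux.summable_T A c)]
    unfold tildeB
    rw [hhalf]
    refine tsum_congr fun k => ?_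
    rw [Matrix.smul_mulVec]
  have htB1 : tildeB φ b
      = (∑' k : ℕ, (((k + 1).factorial : ℂ)⁻¹) • A ^ k).mulVec b := by
    have := htB 1
    simpa using this
  rw [htB1, Matrix.mulVec_mulVec, Stmt1Aux.key A (s : ℂ), Matrix.add_mulVec,
    Matrix.smul_mulVec, Matrix.smul_mulVec, htB (1 - (s : ℂ)), htB (-(s : ℂ))]

end
end

section
/- With the notation of the recurrence Λ^{-k} b̃(φ) = (1-k) b̃((1-k)φ) + k b̃(-kφ), one has for every positive integer n: Σ_{k=1}^{n} Λ^{-k} b̃(φ) = n · b̃(-nφ). -/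
noncomputable section

open scoped BigOperators Matrix

attribute [local instance] Matrix.linftyOpNormedRing Matrix.linftyOpNormedAlgebra
  Matrix.linftyOpNormedSpace

namespace Stmt2Aux

abbrev Mat := Matrix (Fin 4) (Fin 4) ℂ

lemma halfPhiJ_smul (c : ℂ) (φ : Mat) : halfPhiJ (c • φ) = c • halfPhiJ φ := by
  simp only [halfPhiJ, Matrix.mul_smul]
  rw [smul_comm]

/-- The matrix `Σ_j (c^j/(j+1)!) A^j`. -/
def coefM (A : Mat) (c : ℂ) : Mat :=
  ∑' j : ℕ, (c ^ j * ((j + 1).factorial : ℂ)⁻¹) • A ^ j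

lemma summable_norm_aux (A : Mat) (s : ℂ) (g : ℕ → ℂ)
    (hg : ∀ j, ‖g j‖ ≤ ((j.factorial : ℝ))⁻¹) :
    Summable fun j : ℕ => ‖(s ^ j * g j) • A ^ j‖ := by
  apply Summable.of_nonneg_of_le (fun j => norm_nonneg _) (fun j => ?_)
    (Real.summable_pow_div_factorial (‖s‖ * ‖A‖))
  rw [norm_smul, norm_mul, norm_pow]
  have h1 : ‖A ^ j‖ ≤ ‖A‖ ^ j := norm_pow_le A j
  have h2 : ‖s‖ ^ j * ‖g j‖ * ‖A ^ j‖ ≤ ‖s‖ ^ j * (j.factorial : ℝ)⁻¹ * ‖A‖ ^ j := by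
    apply mul_le_mul _ h1 (norm_nonneg _) (by positivity)
    exact mul_le_mul_of_nonneg_left (hg j) (by positivity)
  refine h2.trans (le_of_eq ?_)
  rw [mul_pow]
  field_simp

lemma coef_bound (j : ℕ) : ‖(((j + 1).factorial : ℂ))⁻¹‖ ≤ ((j.factorial : ℝ))⁻¹ := by
  simp only [norm_inv, Complex.norm_natCast]
  apply inv_anti₀ (by positivity)
  exact_mod_cast Nat.factorial_le (Nat.le_succ j)

lemma summable_norm_coefM (A : Mat) (c : ℂ) :
    Summable fun j : ℕ => ‖(c ^ j * ((j + 1).factorial : ℂ)⁻¹) • A ^ j‖ :=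
  summable_norm_aux A c _ (fun j => coef_bound j)

lemma summable_norm_exp (A : Mat) (s : ℂ) :
    Summable fun j : ℕ => ‖(s ^ j * ((j.factorial : ℂ))⁻¹) • A ^ j‖ := by
  apply summable_norm_aux A s _ (fun j => ?_)
  simp

lemma exp_eq (A : Mat) (s : ℂ) :
    NormedSpace.exp (s • A) = ∑' j : ℕ, (s ^ j * ((j.factorial : ℂ))⁻¹) • A ^ j := by
  simp only [NormedSpace.exp_eq_tsum ℂ]
  exact tsum_congr fun j => by rw [smul_pow, smul_smul, mul_comm]

/-- The continuous linear map `M ↦ M.mulVec b`. -/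
def mulVecCLM (b : Fin 4 → ℂ) : Mat →L[ℂ] (Fin 4 → ℂ) :=
  LinearMap.toContinuousLinearMap
    { toFun := fun M => M.mulVec b
      map_add' := fun M N => Matrix.add_mulVec M N b
      map_smul' := fun c M => Matrix.smul_mulVec c M b }

lemma tildeB_eq (φ : Mat) (b : Fin 4 → ℂ) (c : ℂ) :
    tildeB (c • φ) b = (coefM (halfPhiJ φ) c).mulVec b := by
  set A := halfPhiJ φ
  have h1 : tildeB (c • φ) b
      = ∑' j : ℕ, (c ^ j * ((j + 1).factorial : ℂ)⁻¹) • ((A ^ j).mulVec b) := by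
    unfold tildeB
    congr 1
    funext j
    rw [halfPhiJ_smul, smul_pow, Matrix.smul_mulVec, smul_smul, mul_comm]
  have hsum : Summable fun j : ℕ => (c ^ j * ((j + 1).factorial : ℂ)⁻¹) • A ^ j :=
    (summable_norm_coefM A c).of_norm
  have key : (∑' j : ℕ, (c ^ j * ((j + 1).factorial : ℂ)⁻¹) • A ^ j).mulVec b
      = ∑' j : ℕ, ((c ^ j * ((j + 1).factorial : ℂ)⁻¹) • A ^ j).mulVec b :=
    (mulVecCLM b).map_tsum hsum
  rw [h1, coefM, key]
  exact tsum_congr fun j => (Matrix.smul_mulVec _ _ _).symm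

lemma scalar_id (t : ℂ) (m : ℕ) :
    ∑ i ∈ Finset.range (m + 1),
        ((-(t + 1)) ^ i * ((i.factorial : ℂ))⁻¹ * (((m - i) + 1).factorial : ℂ)⁻¹)
      = ((m + 1).factorial : ℂ)⁻¹ * ((t + 1) * (-(t + 1)) ^ m - t * (-t) ^ m) := by
  set s : ℂ := -(t + 1)
  have key : ∑ i ∈ Finset.range (m + 1), ((m + 1).choose i : ℂ) * s ^ i
      = (s + 1) ^ (m + 1) - s ^ (m + 1) := by
    have hfull : (s + 1) ^ (m + 1)
        = ∑ i ∈ Finset.range (m + 2), s ^ i * 1 ^ ((m + 1) - i) * ((m + 1).choose i : ℂ) :=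
      add_pow s 1 (m + 1)
    rw [Finset.sum_range_succ] at hfull
    simp only [one_pow, mul_one, Nat.choose_self, Nat.cast_one] at hfull
    rw [hfull, add_sub_cancel_right]
    exact Finset.sum_congr rfl fun i _ => mul_comm _ _
  have hterm : ∀ i ∈ Finset.range (m + 1),
      s ^ i * ((i.factorial : ℂ))⁻¹ * (((m - i) + 1).factorial : ℂ)⁻¹
        = ((m + 1).factorial : ℂ)⁻¹ * (((m + 1).choose i : ℂ) * s ^ i) := by
    intro i hi
    rw [Finset.mem_range] at hi
    have hi' : i ≤ m := Nat.lt_succ_iff.mp hi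
    have hmi : m - i + 1 = (m + 1) - i := by omega
    have hchoose : ((m + 1).choose i : ℂ) * (i.factorial : ℂ) * (((m + 1) - i).factorial : ℂ)
        = ((m + 1).factorial : ℂ) := by
      exact_mod_cast congrArg (Nat.cast : ℕ → ℂ)
        (Nat.choose_mul_factorial_mul_factorial (le_of_lt (Nat.lt_succ_of_le hi')))
    rw [hmi]
    have h1 : (i.factorial : ℂ) ≠ 0 := Nat.cast_ne_zero.mpr i.factorial_ne_zero
    have h2 : (((m + 1) - i).factorial : ℂ) ≠ 0 := Nat.cast_ne_zero.mpr (Nat.factorial_ne_zero _)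
    have h3 : ((m + 1).factorial : ℂ) ≠ 0 := Nat.cast_ne_zero.mpr (Nat.factorial_ne_zero _)
    field_simp
    rw [← hchoose]
    ring
  rw [Finset.sum_congr rfl hterm, ← Finset.mul_sum, key]
  have hs1 : s + 1 = -t := by simp only [s]; ring
  rw [hs1]
  congr 1
  rw [pow_succ, pow_succ]
  simp only [s]
  ring

/-- The key step identity at matrix level. -/
lemma key_step (A : Mat) (k : ℕ) :
    NormedSpace.exp ((-((k : ℂ) + 1)) • A) * coefM A 1
      = ((k : ℂ) + 1) • coefM A (-((k : ℂ) + 1)) - (k : ℂ) • coefM A (-(k : ℂ)) := by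
  set s : ℂ := -((k : ℂ) + 1)
  rw [exp_eq A s, coefM]
  erw [tsum_mul_tsum_eq_tsum_sum_range_of_summable_norm (summable_norm_exp A s)
    (by exact summable_norm_coefM A 1)]
  have hLHS : ∀ m : ℕ, ∑ i ∈ Finset.range (m + 1),
      ((s ^ i * ((i.factorial : ℂ))⁻¹) • A ^ i)
        * (((1 : ℂ) ^ (m - i) * (((m - i) + 1).factorial : ℂ)⁻¹) • A ^ (m - i))
      = (((m + 1).factorial : ℂ)⁻¹ * (((k : ℂ) + 1) * s ^ m - (k : ℂ) * (-(k : ℂ)) ^ m)) • A ^ m := by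
    intro m
    have : ∀ i ∈ Finset.range (m + 1),
        ((s ^ i * ((i.factorial : ℂ))⁻¹) • A ^ i)
          * (((1 : ℂ) ^ (m - i) * (((m - i) + 1).factorial : ℂ)⁻¹) • A ^ (m - i))
        = (s ^ i * ((i.factorial : ℂ))⁻¹ * (((m - i) + 1).factorial : ℂ)⁻¹) • A ^ m := by
      intro i hi
      rw [Finset.mem_range] at hi
      have hi' : i ≤ m := Nat.lt_succ_iff.mp hi
      rw [smul_mul_smul_comm, ← pow_add, Nat.add_sub_cancel' hi', one_pow, one_mul]
    rw [Finset.sum_congr rfl this, ← Finset.sum_smul, scalar_id (k : ℂ) m]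
  have hRHS : ((k : ℂ) + 1) • coefM A s - (k : ℂ) • coefM A (-(k : ℂ))
      = ∑' m : ℕ, (((m + 1).factorial : ℂ)⁻¹
          * (((k : ℂ) + 1) * s ^ m - (k : ℂ) * (-(k : ℂ)) ^ m)) • A ^ m := by
    unfold coefM
    erw [← Summable.tsum_const_smul _ (summable_norm_coefM A s).of_norm,
      ← Summable.tsum_const_smul _ (summable_norm_coefM A (-(k : ℂ))).of_norm,
      ← Summable.tsum_sub (((summable_norm_coefM A s).of_norm).const_smul _)
        (((summable_norm_coefM A (-(k : ℂ))).of_norm).const_smul _)]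
    exact tsum_congr fun m => by
      rw [smul_smul, smul_smul, ← sub_smul]
      congr 1
      ring
  rw [hRHS]
  exact tsum_congr hLHS

end Stmt2Aux

/-- `Σ_{k=1}^{n} Λ^{-k} b̃(φ) = n · b̃(-nφ)` where `Λ = exp[(1/2)φ:J]`. -/
theorem stmt2 (φ : Matrix (Fin 4) (Fin 4) ℂ) (hφ : φᵀ = -φ) (b : Fin 4 → ℂ)
    (n : ℕ) (hn : 0 < n) :
    (∑ k ∈ Finset.range n,
        (NormedSpace.exp ((-((k : ℂ) + 1)) • halfPhiJ φ)).mulVec (tildeB φ b))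
      = (n : ℂ) • tildeB ((-(n : ℂ)) • φ) b := by
  classical
  set A := halfPhiJ φ with hA
  have htilde : tildeB φ b = (Stmt2Aux.coefM A 1).mulVec b := by
    have := Stmt2Aux.tildeB_eq φ b 1
    rwa [one_smul] at this
  set F : ℕ → (Fin 4 → ℂ) := fun k => (k : ℂ) • tildeB ((-(k : ℂ)) • φ) b with hF
  have hstep : ∀ k : ℕ,
      (NormedSpace.exp ((-((k : ℂ) + 1)) • A)).mulVec (tildeB φ b) = F (k + 1) - F k := by
    intro k
    rw [htilde, Matrix.mulVec_mulVec, Stmt2Aux.key_step A k]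
    rw [Matrix.sub_mulVec, Matrix.smul_mulVec, Matrix.smul_mulVec]
    simp only [hF, Stmt2Aux.tildeB_eq φ b]
    push_cast
    ring_nf
    rfl
  calc (∑ k ∈ Finset.range n,
        (NormedSpace.exp ((-((k : ℂ) + 1)) • A)).mulVec (tildeB φ b))
      = ∑ k ∈ Finset.range n, (F (k + 1) - F k) := by
        exact Finset.sum_congr rfl fun k _ => hstep k
    _ = F n - F 0 := Finset.sum_range_sub F n
    _ = (n : ℂ) • tildeB ((-(n : ℂ)) • φ) b := by
        simp [hF]
end
end

section
/- For every positive integer m, the generalized Bernoulli polynomial of order 2m+1 and degree 2m vanishes at m: B^{(2m+1)}_{2m}(m) = 0. -/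
noncomputable section

open PowerSeries

namespace Stmt10Aux

def gS : ℝ⟦X⟧ := PowerSeries.mk fun k => (1 : ℝ) / (k + 1).factorial

lemma constantCoeff_gS : constantCoeff gS = 1 := by
  rw [gS, ← coeff_zero_eq_constantCoeff_apply, coeff_mk]
  norm_num

lemma gS_ne : constantCoeff gS ≠ 0 := by rw [constantCoeff_gS]; norm_num

lemma inv_mul_gS : gS⁻¹ * gS = 1 := PowerSeries.inv_mul_cancel _ gS_ne

lemma X_mul_gS : X * gS = exp ℝ - 1 := by
  ext n
  rw [map_sub]
  cases n with
  | zero => simp [coeff_exp]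
  | succ k =>
    rw [coeff_succ_X_mul, gS, coeff_mk, coeff_exp, coeff_one]
    simp [Nat.succ_ne_zero]

lemma u_mul_w : gS⁻¹ * (X * gS) = X := by
  rw [mul_comm X gS, ← mul_assoc, inv_mul_gS, one_mul]

lemma deriv_exp : d⁄dX ℝ (exp ℝ) = exp ℝ := by
  ext n
  rw [coeff_derivative, coeff_exp, coeff_exp]
  rw [Nat.factorial_succ]
  push_cast
  field_simp

lemma w_ne : (X * gS : ℝ⟦X⟧) ≠ 0 := by
  intro h
  have := u_mul_w
  rw [h, mul_zero] at this
  exact X_ne_zero this.symm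

lemma deriv_w : d⁄dX ℝ (X * gS) = exp ℝ := by
  rw [X_mul_gS, map_sub, Derivation.map_one_eq_zero, deriv_exp, sub_zero]

lemma h2 : d⁄dX ℝ gS⁻¹ * (X * gS) = 1 - gS⁻¹ * exp ℝ := by
  have h := congrArg (d⁄dX ℝ) u_mul_w
  rw [Derivation.leibniz, derivative_X, smul_eq_mul, smul_eq_mul, deriv_w] at h
  linear_combination h

lemma pA (k : ℕ) : gS⁻¹ ^ k * (X * gS) ^ k = X ^ k := by
  rw [← mul_pow, u_mul_w]

lemma h3 (e : ℕ) : d⁄dX ℝ (gS⁻¹ ^ (e + 1)) =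
    C ((e : ℝ) + 1) * (gS⁻¹ ^ e * d⁄dX ℝ gS⁻¹) := by
  rw [Derivation.leibniz_pow]
  simp [smul_eq_mul, nsmul_eq_mul]

lemma keyid (e : ℕ) :
    C ((e : ℝ) + 1) * (exp ℝ * gS⁻¹ ^ (e + 2)) =
      C ((e : ℝ) + 1) * gS⁻¹ ^ (e + 1) - X * d⁄dX ℝ (gS⁻¹ ^ (e + 1)) := by
  apply mul_right_cancel₀ (pow_ne_zero (e + 2) w_ne)
  rw [h3]
  linear_combination (C ((e : ℝ) + 1) * exp ℝ) * pA (e + 2)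
    - (C ((e : ℝ) + 1) * (X * gS)) * pA (e + 1)
    + (C ((e : ℝ) + 1) * X * (X * gS) * (gS⁻¹ ^ e * (X * gS) ^ e)) * h2
    + (C ((e : ℝ) + 1) * X * (X * gS) * (1 - gS⁻¹ * exp ℝ)) * pA e
    - (C ((e : ℝ) + 1) * X ^ (e + 1) * exp ℝ) * u_mul_w

lemma main (e : ℕ) : coeff (e + 1) (exp ℝ * gS⁻¹ ^ (e + 2)) = 0 := by
  have h := congrArg (coeff (e + 1)) (keyid e)
  rw [coeff_C_mul, map_sub, coeff_C_mul, coeff_succ_X_mul,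
    coeff_derivative] at h
  have he : ((e : ℝ) + 1) ≠ 0 := by positivity
  have h0 : ((e : ℝ) + 1) * coeff (e + 1) (exp ℝ * gS⁻¹ ^ (e + 2)) = 0 := by
    linear_combination h
  exact (mul_eq_zero.mp h0).resolve_left he

end Stmt10Aux

/-- The generalized Bernoulli polynomial `B^{(α)}_n(t)`, defined by the generating
function `(x/(eˣ-1))^α e^{tx} = Σ_n B^{(α)}_n(t) xⁿ/n!`. -/
def genBernoulli (α n : ℕ) (t : ℝ) : ℝ :=
  (n.factorial : ℝ) *
    PowerSeries.coeff n
      (((PowerSeries.mk fun k => (1 : ℝ) / (k + 1).factorial)⁻¹) ^ α *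
        PowerSeries.rescale t (PowerSeries.exp ℝ))

/-- for every positive integer `m`, the generalized Bernoulli
polynomial of order `2m+1` and degree `2m` vanishes at `m`: `B^{(2m+1)}_{2m}(m) = 0`. -/
theorem stmt10 (m : ℕ) (hm : 0 < m) :
    genBernoulli (2 * m + 1) (2 * m) (m : ℝ) = 0 := by
  obtain ⟨j, rfl⟩ : ∃ j, m = j + 1 := ⟨m - 1, (Nat.succ_pred_eq_of_pos hm).symm⟩
  have hg : (PowerSeries.mk fun k => (1 : ℝ) / (k + 1).factorial) = Stmt10Aux.gS := rfl
  unfold genBernoulli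
  rw [hg]
  apply mul_eq_zero_of_right
  have hr : PowerSeries.rescale ((j + 1 : ℕ) : ℝ) (PowerSeries.exp ℝ) =
      PowerSeries.exp ℝ ^ (j + 1) := (PowerSeries.exp_pow_eq_rescale_exp (j + 1)).symm
  rw [hr, pow_succ (PowerSeries.exp ℝ) j]
  have hexpj : PowerSeries.exp ℝ ^ j = ∑ k ∈ Finset.range (j + 1),
      (X * Stmt10Aux.gS) ^ k * ((j.choose k : ℕ) : ℝ⟦X⟧) := by
    have h1 : PowerSeries.exp ℝ = X * Stmt10Aux.gS + 1 := by
      rw [Stmt10Aux.X_mul_gS]; ring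
    rw [h1, add_pow]
    simp
  rw [hexpj, Finset.sum_mul, Finset.mul_sum, map_sum]
  apply Finset.sum_eq_zero
  intro k hk
  have hk' : k ≤ j := Nat.lt_succ_iff.mp (Finset.mem_range.mp hk)
  set e := 2 * j + 1 - k with he
  have h1 : 2 * (j + 1) + 1 = (e + 2) + k := by omega
  have h2 : 2 * (j + 1) = (e + 1) + k := by omega
  have key : Stmt10Aux.gS⁻¹ ^ (2 * (j + 1) + 1) *
      ((X * Stmt10Aux.gS) ^ k * ((j.choose k : ℕ) : ℝ⟦X⟧) * PowerSeries.exp ℝ)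
      = ((j.choose k : ℕ) : ℝ⟦X⟧) *
        (X ^ k * (PowerSeries.exp ℝ * Stmt10Aux.gS⁻¹ ^ (e + 2))) := by
    rw [h1]
    calc Stmt10Aux.gS⁻¹ ^ ((e + 2) + k) *
        ((X * Stmt10Aux.gS) ^ k * ((j.choose k : ℕ) : ℝ⟦X⟧) * PowerSeries.exp ℝ)
        = (Stmt10Aux.gS⁻¹ ^ k * (X * Stmt10Aux.gS) ^ k) *
          (Stmt10Aux.gS⁻¹ ^ (e + 2) * ((j.choose k : ℕ) : ℝ⟦X⟧) * PowerSeries.exp ℝ) := by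
          rw [pow_add]; ring
      _ = X ^ k *
          (Stmt10Aux.gS⁻¹ ^ (e + 2) * ((j.choose k : ℕ) : ℝ⟦X⟧) * PowerSeries.exp ℝ) := by
          rw [Stmt10Aux.pA]
      _ = ((j.choose k : ℕ) : ℝ⟦X⟧) *
          (X ^ k * (PowerSeries.exp ℝ * Stmt10Aux.gS⁻¹ ^ (e + 2))) := by ring
  rw [key, ← map_natCast (PowerSeries.C (R := ℝ)) (j.choose k), PowerSeries.coeff_C_mul, h2,
    PowerSeries.coeff_X_pow_mul, Stmt10Aux.main, mul_zero]
end
end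

section
/- For every integer m ≥ 0, the polynomial 𝓑_{2m+2}(φ) = -2^{2m+1} Σ_{k=0}^{m+1} (2πi)^{2k} (B_{2k}/(2k)!) (B^{(2m+2)}_{2m+2-2k}(m+1)/(2m+2-2k)!) φ^{2m+2-2k} vanishes at φ = 2πi and at φ = -2πi. -/
noncomputable section

open scoped BigOperators
open PowerSeries

namespace Stmt12Aux


def Fs : ℂ⟦X⟧ := PowerSeries.mk fun k => (1 : ℂ) / (k + 1).factorial

def fs : ℂ⟦X⟧ := Fs⁻¹

lemma hF0 : constantCoeff Fs = 1 := by
  have : constantCoeff Fs = (1 : ℂ) / (0 + 1).factorial := by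
    rw [← coeff_zero_eq_constantCoeff, Fs, coeff_mk]
  simpa using this

lemma hfF : fs * Fs = 1 := PowerSeries.inv_mul_cancel Fs (by rw [hF0]; exact one_ne_zero)

lemma hFX : Fs * X = exp ℂ - 1 := by
  ext n
  cases n with
  | zero =>
    simp [Fs, coeff_exp, PowerSeries.coeff_zero_eq_constantCoeff, map_sub]
  | succ n =>
    rw [coeff_succ_mul_X, map_sub, coeff_exp, Fs, coeff_mk]
    have : coeff (n+1) (1 : ℂ⟦X⟧) = 0 := by simp
    rw [this, sub_zero, eq_ratCast, Rat.cast_div]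
    push_cast
    simp

lemma hfu : fs * (exp ℂ - 1) = X := by
  rw [← hFX, ← mul_assoc, hfF, one_mul]

lemma hFs_ne : Fs ≠ 0 := fun h => one_ne_zero (by rw [← hF0, h, map_zero])

lemma hexpne : (exp ℂ - 1 : ℂ⟦X⟧) ≠ 0 := by
  rw [← hFX]
  intro h
  rcases mul_eq_zero.mp h with h | h
  · exact hFs_ne h
  · exact PowerSeries.X_ne_zero h

lemma fs_eq_bps : fs = bernoulliPowerSeries ℂ := by
  have h2 := bernoulliPowerSeries_mul_exp_sub_one ℂ
  exact mul_right_cancel₀ hexpne (by rw [hfu, h2])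

lemma coeff_fs (n : ℕ) : coeff n fs = (bernoulli n : ℂ) / n.factorial := by
  rw [fs_eq_bps, bernoulliPowerSeries, coeff_mk, eq_ratCast, Rat.cast_div]
  push_cast
  ring

lemma hee' : exp ℂ * rescale (-1 : ℂ) (exp ℂ) = 1 := by
  have := PowerSeries.exp_mul_exp_eq_exp_add (1 : ℂ) (-1)
  rw [rescale_one] at this
  simpa [PowerSeries.rescale_zero] using this

lemma hresF : rescale (-1 : ℂ) Fs = rescale (-1 : ℂ) (exp ℂ) * Fs := by
  have hX : (X : ℂ⟦X⟧) ≠ 0 := PowerSeries.X_ne_zero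
  apply mul_right_cancel₀ hX
  have h1 : rescale (-1 : ℂ) (Fs * X) = rescale (-1 : ℂ) (exp ℂ - 1) := by rw [hFX]
  rw [map_mul, map_sub, map_one, rescale_neg_one_X] at h1
  have h2 : rescale (-1 : ℂ) Fs * X = 1 - rescale (-1 : ℂ) (exp ℂ) := by
    have := congrArg (fun t => -t) h1
    simp only [mul_neg, neg_neg, neg_sub] at this
    linear_combination this
  rw [h2, mul_assoc, hFX, mul_sub, mul_one, mul_comm (rescale (-1:ℂ) (exp ℂ)) (exp ℂ), hee']

lemma hresf : rescale (-1 : ℂ) fs = exp ℂ * fs := by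
  have hRF_ne : rescale (-1 : ℂ) Fs ≠ 0 := by
    intro h
    exact hFs_ne (by simpa using PowerSeries.rescale_injective (by norm_num : (-1:ℂ) ≠ 0) (h.trans (map_zero _).symm))
  apply mul_right_cancel₀ hRF_ne
  rw [← map_mul, hfF, map_one, hresF]
  symm
  calc exp ℂ * fs * (rescale (-1:ℂ) (exp ℂ) * Fs)
      = (fs * Fs) * (exp ℂ * rescale (-1:ℂ) (exp ℂ)) := by ring
    _ = 1 := by rw [hfF, hee', mul_one]




lemma derivative_exp : d⁄dX ℂ (exp ℂ) = exp ℂ := by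
  ext n
  rw [PowerSeries.coeff_derivative, coeff_exp, coeff_exp]
  have h : ((1:ℚ)/(n+1).factorial) * ((n:ℚ)+1) = 1/n.factorial := by
    rw [Nat.factorial_succ]
    have h1 : ((n:ℚ)+1) ≠ 0 := by positivity
    have h2 : ((n.factorial : ℚ)) ≠ 0 := by
      exact_mod_cast Nat.factorial_ne_zero n
    field_simp
    push_cast; ring
  calc algebraMap ℚ ℂ (1/(n+1).factorial) * ((n:ℂ)+1)
      = algebraMap ℚ ℂ ((1/(n+1).factorial) * ((n:ℚ)+1)) := by
        rw [map_mul]; push_cast; ring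
    _ = _ := by rw [h]

lemma hDexp1 : d⁄dX ℂ (exp ℂ - 1) = exp ℂ := by
  have : d⁄dX ℂ (exp ℂ - 1) = d⁄dX ℂ (exp ℂ) - d⁄dX ℂ 1 := map_sub _ _ _
  rw [this, Derivation.map_one_eq_zero, sub_zero, derivative_exp]

lemma hDf : d⁄dX ℂ fs * (exp ℂ - 1) + fs * exp ℂ = 1 := by
  have := congrArg (d⁄dX ℂ) hfu
  rw [Derivation.leibniz, PowerSeries.derivative_X, hDexp1, smul_eq_mul, smul_eq_mul] at this
  linear_combination this

lemma key_zero (M : ℕ) : coeff (M + 1) (exp ℂ * fs ^ (M + 2)) = 0 := by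
  have hcast : ((M+1 : ℕ) : ℂ⟦X⟧) = C ((M:ℂ)+1) := by
    rw [← map_natCast (C (R := ℂ)) (M+1)]
    norm_num
  have hXD : d⁄dX ℂ (fs ^ (M + 1)) * X =
      C ((M:ℂ)+1) * (fs ^ (M + 1) - exp ℂ * fs ^ (M + 2)) := by
    rw [Derivation.leibniz_pow]
    have h1 : d⁄dX ℂ fs * X = fs * (1 - fs * exp ℂ) := by
      rw [← hfu, ← mul_assoc, mul_comm (d⁄dX ℂ fs) fs, mul_assoc]
      have h2 : d⁄dX ℂ fs * (exp ℂ - 1) = 1 - fs * exp ℂ := by linear_combination hDf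
      rw [h2]
    have hsmul : ((M:ℕ) + 1) • (fs ^ (M + 1 - 1) • d⁄dX ℂ fs) =
        C ((M:ℂ)+1) * (fs ^ M * d⁄dX ℂ fs) := by
      rw [smul_eq_mul, nsmul_eq_mul, hcast]
      norm_num
    rw [hsmul]
    calc C ((M:ℂ)+1) * (fs ^ M * d⁄dX ℂ fs) * X
        = C ((M:ℂ)+1) * (fs ^ M * (d⁄dX ℂ fs * X)) := by ring
      _ = C ((M:ℂ)+1) * (fs ^ M * (fs * (1 - fs * exp ℂ))) := by rw [h1]
      _ = C ((M:ℂ)+1) * (fs ^ (M + 1) - exp ℂ * fs ^ (M + 2)) := by ring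
  have hc := congrArg (coeff (M + 1)) hXD
  rw [coeff_succ_mul_X, PowerSeries.coeff_derivative, coeff_C_mul, map_sub] at hc
  have hM : ((M:ℂ)+1) ≠ 0 := Nat.cast_add_one_ne_zero M
  have h0 : ((M:ℂ)+1) * coeff (M+1) (exp ℂ * fs^(M+2)) = 0 := by linear_combination hc
  exact (mul_eq_zero.mp h0).resolve_left hM

lemma coeff_fs_pow (N : ℕ) : coeff N (fs ^ (N+1)) = (-1 : ℂ) ^ N := by
  induction N with
  | zero =>
    rw [pow_one, coeff_zero_eq_constantCoeff, pow_zero]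
    have := congrArg (constantCoeff) hfF
    rw [map_mul, hF0, mul_one, map_one] at this
    exact this
  | succ M ih =>
    have hsplit : exp ℂ * fs ^ (M+2) = fs ^ (M+2) + fs ^ (M+1) * X := by
      calc exp ℂ * fs ^ (M+2) = fs ^ (M+2) + fs ^ (M+1) * (fs * (exp ℂ - 1)) := by ring
        _ = fs ^ (M+2) + fs ^ (M+1) * X := by rw [hfu]
    have hc := key_zero M
    rw [hsplit, map_add, coeff_succ_mul_X, ih] at hc
    have : coeff (M+1) (fs ^ (M+2)) = -(-1:ℂ)^M := by linear_combination hc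
    rw [this]
    ring




/-- `G = fs^(2m+2) * exp^(m+1)` is even. -/
lemma G_symm (m : ℕ) :
    rescale (-1 : ℂ) (fs ^ (2*m+2) * exp ℂ ^ (m+1)) = fs ^ (2*m+2) * exp ℂ ^ (m+1) := by
  rw [map_mul, map_pow, map_pow, hresf]
  have h1 : (exp ℂ * fs) ^ (2*m+2) = fs ^ (2*m+2) * exp ℂ ^ (m+1) * exp ℂ ^ (m+1) := by
    have h2 : exp ℂ ^ (2*m+2) = exp ℂ ^ (m+1) * exp ℂ ^ (m+1) := by
      rw [← pow_add]; congr 1; omega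
    rw [mul_pow, h2]; ring
  rw [h1]
  calc fs ^ (2*m+2) * exp ℂ ^ (m+1) * exp ℂ ^ (m+1) * rescale (-1:ℂ) (exp ℂ) ^ (m+1)
      = fs ^ (2*m+2) * exp ℂ ^ (m+1) * (exp ℂ * rescale (-1:ℂ) (exp ℂ)) ^ (m+1) := by
        rw [mul_pow]; ring
    _ = fs ^ (2*m+2) * exp ℂ ^ (m+1) := by rw [hee', one_pow, mul_one]

lemma G_odd (m n : ℕ) (hn : Odd n) : coeff n (fs ^ (2*m+2) * exp ℂ ^ (m+1)) = 0 := by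
  have := congrArg (coeff n) (G_symm m)
  rw [coeff_rescale, hn.neg_one_pow] at this
  linear_combination (-(1:ℂ)/2) * this

lemma u_pow_mul (i K : ℕ) (h : i ≤ K) :
    (exp ℂ - 1) ^ i * fs ^ K = X ^ i * fs ^ (K - i) := by
  have h1 : fs ^ i * (exp ℂ - 1) ^ i = X ^ i := by rw [← mul_pow, hfu]
  have h2 : fs ^ K = fs ^ i * fs ^ (K - i) := by rw [← pow_add]; congr 1; omega
  calc (exp ℂ - 1) ^ i * fs ^ K = (fs ^ i * (exp ℂ - 1) ^ i) * fs ^ (K - i) := by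
        rw [h2]; ring
    _ = X ^ i * fs ^ (K - i) := by rw [h1]

/-- coefficient `2m+2` of `fs^(2m+3) * exp^(m+1)` vanishes. -/
lemma h_coeff (m : ℕ) : coeff (2*m+2) (fs ^ (2*m+3) * exp ℂ ^ (m+1)) = 0 := by
  have hexp : exp ℂ ^ (m+1) = ∑ i ∈ Finset.range (m+2),
      (exp ℂ - 1) ^ i * 1 ^ (m+1-i) * (Nat.choose (m+1) i : ℂ⟦X⟧) := by
    have := add_pow (exp ℂ - 1) 1 (m+1)
    rw [sub_add_cancel] at this
    exact this
  rw [hexp, Finset.mul_sum]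
  rw [map_sum]
  have hterm : ∀ i ∈ Finset.range (m+2),
      coeff (2*m+2) (fs ^ (2*m+3) * ((exp ℂ - 1) ^ i * 1 ^ (m+1-i) * (Nat.choose (m+1) i : ℂ⟦X⟧)))
      = (Nat.choose (m+1) i : ℂ) * (-1:ℂ)^i := by
    intro i hi
    have hi' : i ≤ m+1 := Nat.lt_succ_iff.mp (Finset.mem_range.mp hi)
    have hi2 : i ≤ 2*m+3 := by omega
    have h1 : fs ^ (2*m+3) * ((exp ℂ - 1) ^ i * 1 ^ (m+1-i) * (Nat.choose (m+1) i : ℂ⟦X⟧))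
        = (Nat.choose (m+1) i : ℂ⟦X⟧) * (X ^ i * fs ^ (2*m+3-i)) := by
      rw [one_pow, mul_one, ← u_pow_mul i (2*m+3) hi2]; ring
    rw [h1]
    have hcast : ((Nat.choose (m+1) i : ℕ) : ℂ⟦X⟧) = C (Nat.choose (m+1) i : ℂ) := by
      rw [← map_natCast (C (R := ℂ))]
    rw [hcast, coeff_C_mul]
    have hsplit : 2*m+2 = (2*m+2-i) + i := by omega
    rw [hsplit, coeff_X_pow_mul]
    have h3 : 2*m+3-i = (2*m+2-i)+1 := by omega
    rw [h3, coeff_fs_pow]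
    have h4 : (-1:ℂ) ^ (2*m+2-i) = (-1:ℂ)^i := by
      rcases Nat.even_or_odd i with he | ho
      · have he2 : Even (2*m+2-i) := by
          obtain ⟨k, rfl⟩ := he
          exact ⟨m+1-k, by omega⟩
        rw [he2.neg_one_pow, he.neg_one_pow]
      · have ho2 : Odd (2*m+2-i) := by
          obtain ⟨k, rfl⟩ := ho
          exact ⟨m-k, by omega⟩
        rw [ho2.neg_one_pow, ho.neg_one_pow]
    rw [h4]
  rw [Finset.sum_congr rfl hterm]
  have halt := add_pow (-1 : ℂ) 1 (m+1)
  simp only [one_pow, mul_one, neg_add_cancel] at halt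
  rw [zero_pow (Nat.succ_ne_zero m)] at halt
  rw [Finset.sum_congr rfl
    (fun i _ => mul_comm ((Nat.choose (m+1) i : ℂ)) ((-1:ℂ)^i))]
  exact halt.symm

/-- The central identity. -/
lemma S_zero (m : ℕ) :
    ∑ k ∈ Finset.range (m+2), (bernoulli (2*k) : ℂ) / ((2*k).factorial : ℂ)
      * coeff (2*m+2-2*k) (fs ^ (2*m+2) * exp ℂ ^ (m+1)) = 0 := by
  set G := fs ^ (2*m+2) * exp ℂ ^ (m+1) with hG
  have hprod : coeff (2*m+2) (fs * G) =
      ∑ j ∈ Finset.range (2*m+3), coeff j fs * coeff (2*m+2-j) G := by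
    rw [coeff_mul, Finset.Nat.sum_antidiagonal_eq_sum_range_succ
      (f := fun a b => coeff a fs * coeff b G)]
  have hfsG : fs * G = fs ^ (2*m+3) * exp ℂ ^ (m+1) := by
    rw [hG]; ring
  have himg : ∑ j ∈ Finset.range (2*m+3), coeff j fs * coeff (2*m+2-j) G
      = ∑ k ∈ Finset.range (m+2), coeff (2*k) fs * coeff (2*m+2-2*k) G := by
    rw [← Finset.sum_image (f := fun j => coeff j fs * coeff (2*m+2-j) G)
      (g := fun k => 2*k) (s := Finset.range (m+2)) (fun x _ y _ h => by dsimp at h; omega)]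
    symm
    apply Finset.sum_subset
    · intro j hj
      obtain ⟨k, hk, rfl⟩ := Finset.mem_image.mp hj
      simp only [Finset.mem_range] at hk ⊢
      omega
    · intro j hj hnot
      have hodd : Odd (2*m+2-j) := by
        simp only [Finset.mem_image, Finset.mem_range] at hnot hj
        rcases Nat.even_or_odd j with he | ho
        · exact absurd he (by
            intro h2
            obtain ⟨k, rfl⟩ := h2
            exact hnot ⟨k, by omega, by omega⟩)
        · obtain ⟨k, rfl⟩ := ho
          exact ⟨m - k, by omega⟩
      rw [G_odd m _ hodd, mul_zero]
  have hS : ∑ k ∈ Finset.range (m+2), (bernoulli (2*k) : ℂ) / ((2*k).factorial : ℂ)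
      * coeff (2*m+2-2*k) G
      = ∑ k ∈ Finset.range (m+2), coeff (2*k) fs * coeff (2*m+2-2*k) G := by
    refine Finset.sum_congr rfl (fun k _ => ?_)
    rw [coeff_fs]
  rw [hS, ← himg, ← hprod, hfsG, h_coeff]


end Stmt12Aux

open Stmt12Aux

/-- The generalized Bernoulli polynomial `B^{(α)}_n(t)` (with complex argument),
defined by `(x/(eˣ-1))^α e^{tx} = Σ_n B^{(α)}_n(t) xⁿ/n!`. -/
def genBernoulliC (α n : ℕ) (t : ℂ) : ℂ :=
  (n.factorial : ℂ) *
    PowerSeries.coeff n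
      (((PowerSeries.mk fun k => (1 : ℂ) / (k + 1).factorial)⁻¹) ^ α *
        PowerSeries.rescale t (PowerSeries.exp ℂ))

/-- The polynomial `𝓑_{2m+2}(φ) = -2^{2m+1} Σ_{k=0}^{m+1} (2πi)^{2k} (B_{2k}/(2k)!)
(B^{(2m+2)}_{2m+2-2k}(m+1)/(2m+2-2k)!) φ^{2m+2-2k}`. -/
def distPoly (m : ℕ) (φ : ℂ) : ℂ :=
  -(2 : ℂ) ^ (2 * m + 1) *
    ∑ k ∈ Finset.range (m + 2),
      (2 * Real.pi * Complex.I) ^ (2 * k) * ((bernoulli (2 * k) : ℂ) / ((2 * k).factorial : ℂ))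
        * (genBernoulliC (2 * m + 2) (2 * m + 2 - 2 * k) ((m : ℂ) + 1)
            / ((2 * m + 2 - 2 * k).factorial : ℂ))
        * φ ^ (2 * m + 2 - 2 * k)

namespace Stmt12Aux

lemma genB_div (m n : ℕ) :
    genBernoulliC (2*m+2) n ((m:ℂ)+1) / (n.factorial : ℂ)
      = coeff n (fs ^ (2*m+2) * exp ℂ ^ (m+1)) := by
  have hres : rescale ((m:ℂ)+1) (exp ℂ) = exp ℂ ^ (m+1) := by
    rw [PowerSeries.exp_pow_eq_rescale_exp]
    push_cast
    rfl
  rw [genBernoulliC, ← hres,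
    mul_div_cancel_left₀ _ (by exact_mod_cast Nat.factorial_ne_zero n : (n.factorial : ℂ) ≠ 0)]
  rfl

lemma distPoly_zero (m : ℕ) (φ : ℂ)
    (hφ : φ = 2 * Real.pi * Complex.I ∨ φ = -(2 * Real.pi * Complex.I)) :
    distPoly m φ = 0 := by
  set z : ℂ := 2 * Real.pi * Complex.I with hz
  have hterm : ∀ k ∈ Finset.range (m+2),
      z ^ (2 * k) * ((bernoulli (2 * k) : ℂ) / ((2 * k).factorial : ℂ))
        * (genBernoulliC (2 * m + 2) (2 * m + 2 - 2 * k) ((m : ℂ) + 1)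
            / ((2 * m + 2 - 2 * k).factorial : ℂ))
        * φ ^ (2 * m + 2 - 2 * k)
      = z ^ (2*m+2) * ((bernoulli (2*k) : ℂ) / ((2*k).factorial : ℂ)
          * coeff (2*m+2-2*k) (fs ^ (2*m+2) * exp ℂ ^ (m+1))) := by
    intro k hk
    have hk' : k ≤ m + 1 := Nat.lt_succ_iff.mp (Finset.mem_range.mp hk)
    have hφpow : φ ^ (2 * m + 2 - 2 * k) = z ^ (2 * m + 2 - 2 * k) := by
      rcases hφ with h | h
      · rw [h]
      · rw [h]
        exact Even.neg_pow ⟨m + 1 - k, by omega⟩ z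
    have hzz : z ^ (2 * k) * z ^ (2 * m + 2 - 2 * k) = z ^ (2*m+2) := by
      rw [← pow_add]
      congr 1
      omega
    rw [hφpow, genB_div]
    calc z ^ (2 * k) * ((bernoulli (2 * k) : ℂ) / ((2 * k).factorial : ℂ))
        * coeff (2*m+2-2*k) (fs ^ (2*m+2) * exp ℂ ^ (m+1)) * z ^ (2 * m + 2 - 2 * k)
        = (z ^ (2 * k) * z ^ (2 * m + 2 - 2 * k)) *
            ((bernoulli (2 * k) : ℂ) / ((2 * k).factorial : ℂ)
              * coeff (2*m+2-2*k) (fs ^ (2*m+2) * exp ℂ ^ (m+1))) := by ring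
      _ = _ := by rw [hzz]
  rw [distPoly, Finset.sum_congr rfl hterm, ← Finset.mul_sum, S_zero, mul_zero, mul_zero]

end Stmt12Aux

/-- for every `m ≥ 0`, the polynomial `𝓑_{2m+2}` vanishes at `φ = ±2πi`. -/
theorem stmt12 (m : ℕ) :
    distPoly m (2 * Real.pi * Complex.I) = 0
      ∧ distPoly m (-(2 * Real.pi * Complex.I)) = 0 :=
  ⟨Stmt12Aux.distPoly_zero m _ (Or.inl rfl), Stmt12Aux.distPoly_zero m _ (Or.inr rfl)⟩
end
end
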